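/- Let (Ω, P) be a probability space, let d ≥ 1 be a natural number, let γ be a real with 0 < γ < 1, let G ≥ 0, and let (X_n)_{n∈ℕ} be Bochner integrable random vectors X_n : Ω → ℝ^d satisfying ‖X_n(ω)‖ ≤ G·(n+1)·γ^n for almost every ω and every n. Set Ŝ_N := ∑_{n=0}^{N-1} X_n and μ := ∑_{n=0}^∞ E[X_n] (the latter series converges absolutely). Then for every natural number N, E[‖Ŝ_N − μ‖] ≤ √d·G/(1-γ)² + G·((N+1)/(1-γ) + γ/(1-γ)²)·γ^N. -/

import Mathlib

open MeasureTheory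

/-- First-moment error bound for the truncated estimator: if `X n` are integrable random
vectors in `ℝ^d` with `‖X n ω‖ ≤ G·(n+1)·γ^n` almost surely, `Ŝ_N := ∑_{n<N} X n` and
`μ := ∑_{n=0}^∞ E[X n]` (absolutely convergent), then
`E[‖Ŝ_N − μ‖] ≤ √d·G/(1-γ)² + G·((N+1)/(1-γ) + γ/(1-γ)²)·γ^N`. -/
theorem stmt_6 (d : ℕ) (hd : 1 ≤ d) {Ω : Type*} [MeasurableSpace Ω] (P : Measure Ω)
    [IsProbabilityMeasure P] (γ G : ℝ) (h0 : 0 < γ) (h1 : γ < 1) (hG : 0 ≤ G)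
    (X : ℕ → Ω → EuclideanSpace ℝ (Fin d))
    (hint : ∀ n : ℕ, Integrable (X n) P)
    (hbd : ∀ n : ℕ, ∀ᵐ ω ∂P, ‖X n ω‖ ≤ G * ((n : ℝ) + 1) * γ ^ n) :
    (Summable fun n : ℕ => ‖∫ ω, X n ω ∂P‖) ∧
      ∀ N : ℕ,
        ∫ ω, ‖(∑ n ∈ Finset.range N, X n ω) - ∑' n : ℕ, ∫ ω', X n ω' ∂P‖ ∂P ≤
          Real.sqrt d * G / (1 - γ) ^ 2 +
            G * (((N : ℝ) + 1) / (1 - γ) + γ / (1 - γ) ^ 2) * γ ^ N := by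
  have hγ1 : 0 < 1 - γ := by linarith
  have hγn : ‖γ‖ < 1 := by rw [Real.norm_eq_abs, abs_of_pos h0]; exact h1
  set a : ℕ → ℝ := fun n => G * ((n : ℝ) + 1) * γ ^ n with ha_def
  have ha0 : ∀ n, 0 ≤ a n := fun n => by positivity
  have hsum_n : Summable (fun n : ℕ => (n : ℝ) * γ ^ n) := by
    simpa using summable_pow_mul_geometric_of_norm_lt_one 1 hγn
  have hsum_g : Summable (fun n : ℕ => γ ^ n) := summable_geometric_of_lt_one h0.le h1
  have ha_eq : a = fun n : ℕ => G * ((n : ℝ) * γ ^ n) + G * γ ^ n := by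
    funext n; simp only [ha_def]; ring
  have ha_sum : Summable a := by
    rw [ha_eq]; exact ((hsum_n.mul_left G).add (hsum_g.mul_left G))
  have htsum_a : ∑' n, a n = G / (1 - γ) ^ 2 := by
    rw [ha_eq, Summable.tsum_add (hsum_n.mul_left G) (hsum_g.mul_left G),
      tsum_mul_left, tsum_mul_left, tsum_coe_mul_geometric_of_norm_lt_one hγn,
      tsum_geometric_of_lt_one h0.le h1]
    field_simp
    ring
  have hnorm_int : ∀ n, ‖∫ ω, X n ω ∂P‖ ≤ a n := by
    intro n
    calc ‖∫ ω, X n ω ∂P‖ ≤ ∫ ω, ‖X n ω‖ ∂P := norm_integral_le_integral_norm _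
    _ ≤ ∫ _ω, a n ∂P := integral_mono_ae (hint n).norm (integrable_const _) (hbd n)
    _ = a n := by simp
  have hsum1 : Summable fun n : ℕ => ‖∫ ω, X n ω ∂P‖ :=
    Summable.of_nonneg_of_le (fun n => norm_nonneg _) hnorm_int ha_sum
  refine ⟨hsum1, fun N => ?_⟩
  set K : ℝ := G / (1 - γ) ^ 2 with hK_def
  have hK0 : 0 ≤ K := by positivity
  set m : EuclideanSpace ℝ (Fin d) := ∑' n : ℕ, ∫ ω', X n ω' ∂P with hm_def
  set S : Ω → EuclideanSpace ℝ (Fin d) := fun ω => ∑ n ∈ Finset.range N, X n ω with hS_def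
  have hS_int : Integrable S P := integrable_finset_sum _ (fun n _ => hint n)
  set ES : EuclideanSpace ℝ (Fin d) := ∫ ω, S ω ∂P with hES_def
  set B : ℝ := ∑ n ∈ Finset.range N, a n with hB_def
  have hB0 : 0 ≤ B := Finset.sum_nonneg fun n _ => ha0 n
  have hBK : B ≤ K := by
    rw [hB_def, ← htsum_a]
    exact Summable.sum_le_tsum _ (fun n _ => ha0 n) ha_sum
  -- a.e. bound on ‖S‖
  have hS_bd : ∀ᵐ ω ∂P, ‖S ω‖ ≤ B := by
    have := ae_all_iff.2 hbd
    filter_upwards [this] with ω hω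
    calc ‖S ω‖ ≤ ∑ n ∈ Finset.range N, ‖X n ω‖ := norm_sum_le _ _
    _ ≤ ∑ n ∈ Finset.range N, a n := Finset.sum_le_sum fun n _ => hω n
  have hES_bd : ‖ES‖ ≤ B := by
    calc ‖ES‖ ≤ ∫ ω, ‖S ω‖ ∂P := norm_integral_le_integral_norm _
    _ ≤ ∫ _ω, B ∂P := integral_mono_ae hS_int.norm (integrable_const _) hS_bd
    _ = B := by simp
  -- tail bound
  have hES_sum : ES = ∑ n ∈ Finset.range N, ∫ ω, X n ω ∂P := by
    rw [hES_def, hS_def, integral_finset_sum _ (fun n _ => hint n)]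
  have hI_sum : Summable fun n : ℕ => ∫ ω, X n ω ∂P := hsum1.of_norm
  have htail_eq : m - ES = ∑' k : ℕ, ∫ ω, X (k + N) ω ∂P := by
    rw [hES_sum, hm_def, eq_comm]
    exact eq_sub_of_add_eq (by rw [add_comm]; exact Summable.sum_add_tsum_nat_add N hI_sum)
  have htail_sum : Summable fun k : ℕ => a (k + N) :=
    (summable_nat_add_iff N).2 ha_sum
  have htail_le : ‖m - ES‖ ≤ ∑' k : ℕ, a (k + N) := by
    rw [htail_eq]
    refine (norm_tsum_le_tsum_norm ?_).trans (Summable.tsum_le_tsum (fun k => hnorm_int _) ?_ htail_sum)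
    · exact Summable.of_nonneg_of_le (fun k => norm_nonneg _) (fun k => hnorm_int _) htail_sum
    · exact Summable.of_nonneg_of_le (fun k => norm_nonneg _) (fun k => hnorm_int _) htail_sum
  have htail_val : ∑' k : ℕ, a (k + N) =
      G * (((N : ℝ) + 1) / (1 - γ) + γ / (1 - γ) ^ 2) * γ ^ N := by
    have hfe : (fun k : ℕ => a (k + N)) =
        fun k : ℕ => (G * ((N : ℝ) + 1) * γ ^ N) * γ ^ k + (G * γ ^ N) * ((k : ℝ) * γ ^ k) := by
      funext k
      simp only [ha_def, Nat.cast_add, pow_add]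
      ring
    rw [hfe, Summable.tsum_add (hsum_g.mul_left _) (hsum_n.mul_left _),
      tsum_mul_left, tsum_mul_left, tsum_coe_mul_geometric_of_norm_lt_one hγn,
      tsum_geometric_of_lt_one h0.le h1]
    field_simp
  -- variance / Jensen step : ∫ ‖S - ES‖ ≤ B
  have hZ_int : Integrable (fun ω => ‖S ω - ES‖) P := (hS_int.sub (integrable_const _)).norm
  have hZ_bd : ∀ᵐ ω ∂P, ‖S ω - ES‖ ≤ 2 * B := by
    filter_upwards [hS_bd] with ω hω
    calc ‖S ω - ES‖ ≤ ‖S ω‖ + ‖ES‖ := norm_sub_le _ _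
    _ ≤ B + B := add_le_add hω hES_bd
    _ = 2 * B := by ring
  have hZsq_int : Integrable (fun ω => ‖S ω - ES‖ ^ 2) P := by
    refine Integrable.mono' (integrable_const ((2 * B) ^ 2)) ?_ ?_
    · exact (hZ_int.aestronglyMeasurable.pow 2)
    · filter_upwards [hZ_bd] with ω hω
      rw [Real.norm_eq_abs, abs_of_nonneg (by positivity)]
      exact pow_le_pow_left₀ (norm_nonneg _) hω 2
  have hSsq_int : Integrable (fun ω => ‖S ω‖ ^ 2) P := by
    refine Integrable.mono' (integrable_const (B ^ 2)) ?_ ?_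
    · exact (hS_int.norm.aestronglyMeasurable.pow 2)
    · filter_upwards [hS_bd] with ω hω
      rw [Real.norm_eq_abs, abs_of_nonneg (by positivity)]
      exact pow_le_pow_left₀ (norm_nonneg _) hω 2
  have hinner_int : Integrable (fun ω => (inner ℝ (ES) (S ω) : ℝ)) P := by
    simpa using (innerSL ℝ ES).integrable_comp hS_int
  have hvar : ∫ ω, ‖S ω - ES‖ ^ 2 ∂P = (∫ ω, ‖S ω‖ ^ 2 ∂P) - ‖ES‖ ^ 2 := by
    have hexp : ∀ ω, ‖S ω - ES‖ ^ 2 = ‖S ω‖ ^ 2 - 2 * (inner ℝ ES (S ω) : ℝ) + ‖ES‖ ^ 2 := by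
      intro ω
      rw [norm_sub_sq_real, real_inner_comm]
    simp only [hexp]
    have h1 : Integrable (fun ω => ‖S ω‖ ^ 2 - 2 * (inner ℝ ES (S ω) : ℝ)) P :=
      hSsq_int.sub (hinner_int.const_mul 2)
    rw [integral_add h1 (integrable_const _),
      integral_sub hSsq_int (hinner_int.const_mul 2), integral_const_mul _,
      integral_inner hS_int, ← hES_def, real_inner_self_eq_norm_sq]
    simp only [integral_const, measure_univ, probReal_univ, ENNReal.toReal_one, smul_eq_mul, one_mul]
    ring
  have hvar_le : ∫ ω, ‖S ω - ES‖ ^ 2 ∂P ≤ B ^ 2 := by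
    rw [hvar]
    have : ∫ ω, ‖S ω‖ ^ 2 ∂P ≤ B ^ 2 := by
      calc ∫ ω, ‖S ω‖ ^ 2 ∂P ≤ ∫ _ω, B ^ 2 ∂P := by
            refine integral_mono_ae hSsq_int (integrable_const _) ?_
            filter_upwards [hS_bd] with ω hω
            exact pow_le_pow_left₀ (norm_nonneg _) hω 2
      _ = B ^ 2 := by simp
    linarith [sq_nonneg ‖ES‖]
  set I : ℝ := ∫ ω, ‖S ω - ES‖ ∂P with hI_def
  have hI0 : 0 ≤ I := integral_nonneg fun ω => norm_nonneg _
  have hIsq : I ^ 2 ≤ ∫ ω, ‖S ω - ES‖ ^ 2 ∂P := by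
    have h0le : 0 ≤ ∫ ω, (‖S ω - ES‖ - I) ^ 2 ∂P :=
      integral_nonneg fun ω => sq_nonneg _
    have hexp : ∀ ω, (‖S ω - ES‖ - I) ^ 2 = ‖S ω - ES‖ ^ 2 - 2 * I * ‖S ω - ES‖ + I ^ 2 := by
      intro ω; ring
    rw [show (fun ω => (‖S ω - ES‖ - I) ^ 2) = fun ω =>
        ‖S ω - ES‖ ^ 2 - 2 * I * ‖S ω - ES‖ + I ^ 2 from funext hexp] at h0le
    have h1 : Integrable (fun ω => ‖S ω - ES‖ ^ 2 - 2 * I * ‖S ω - ES‖) P :=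
      hZsq_int.sub (hZ_int.const_mul _)
    rw [integral_add h1 (integrable_const _),
      integral_sub hZsq_int (hZ_int.const_mul _), integral_const_mul _] at h0le
    simp only [integral_const, measure_univ, probReal_univ, ENNReal.toReal_one, smul_eq_mul, one_mul,
      ← hI_def] at h0le
    nlinarith
  have hI_le : I ≤ K := by
    have hIK : I ^ 2 ≤ K ^ 2 :=
      hIsq.trans (hvar_le.trans (pow_le_pow_left₀ hB0 hBK 2))
    calc I = Real.sqrt (I ^ 2) := (Real.sqrt_sq hI0).symm
    _ ≤ Real.sqrt (K ^ 2) := Real.sqrt_le_sqrt hIK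
    _ = K := Real.sqrt_sq hK0
  -- put it together
  have hmain : ∫ ω, ‖S ω - m‖ ∂P ≤ I + ‖m - ES‖ := by
    have hle : ∀ ω, ‖S ω - m‖ ≤ ‖S ω - ES‖ + ‖m - ES‖ := by
      intro ω
      calc ‖S ω - m‖ = ‖(S ω - ES) - (m - ES)‖ := by rw [sub_sub_sub_cancel_right]
      _ ≤ ‖S ω - ES‖ + ‖m - ES‖ := norm_sub_le _ _
    calc ∫ ω, ‖S ω - m‖ ∂P ≤ ∫ ω, (‖S ω - ES‖ + ‖m - ES‖) ∂P := by
          refine integral_mono_ae ((hS_int.sub (integrable_const _)).norm) ?_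
            (Filter.Eventually.of_forall hle)
          exact hZ_int.add (integrable_const _)
    _ = I + ‖m - ES‖ := by
        rw [integral_add hZ_int (integrable_const _)]
        simp [hI_def]
  have hsqrtd : (1 : ℝ) ≤ Real.sqrt d := by
    rw [show (1 : ℝ) = Real.sqrt 1 from (Real.sqrt_one).symm]
    exact Real.sqrt_le_sqrt (by exact_mod_cast hd)
  have hKle : K ≤ Real.sqrt d * G / (1 - γ) ^ 2 := by
    rw [hK_def]
    have hGle : G ≤ Real.sqrt d * G := le_mul_of_one_le_left hG hsqrtd
    gcongr
  calc ∫ ω, ‖(∑ n ∈ Finset.range N, X n ω) - m‖ ∂P ≤ I + ‖m - ES‖ := hmain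
  _ ≤ K + G * (((N : ℝ) + 1) / (1 - γ) + γ / (1 - γ) ^ 2) * γ ^ N :=
      add_le_add hI_le (htail_le.trans htail_val.le)
  _ ≤ Real.sqrt d * G / (1 - γ) ^ 2 +
      G * (((N : ℝ) + 1) / (1 - γ) + γ / (1 - γ) ^ 2) * γ ^ N :=
      add_le_add_left hKle _
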